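/- Fix a power of two n, a power of two B dividing n, an integer F ≥ 2, and an (n,B,F)-flat filter G. Let π be any approximately pairwise-independent random permutation of [n], and for f, f' ∈ [n] define o_f(f') = π(f') − (n/B)·round(π(f)·B/n), where round(x) is a nearest integer to x. Then for every X ∈ ℂ^n and every f ∈ [n]: Σ_{f'∈[n], f'≠f} |X̂_{f'}|² · E_π[|Ĝ_{o_f(f')}|²] ≤ (10/B)·‖X̂‖₂². -/

import Mathlib

open Finset

/-- Discrete Fourier transform of a length-`n` signal, with `1/n` normalization. -/
noncomputable def dft (n : ℕ) [NeZero n] (X : ZMod n → ℂ) : ZMod n → ℂ :=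
  fun f => (n : ℂ)⁻¹ * ∑ t : ZMod n, X t *
    Complex.exp (-(2 * Real.pi * Complex.I) * ((f * t).val : ℂ) / (n : ℂ))

/-- Circular (modulo-`n`) distance of an index to `0`. -/
def cdist (n : ℕ) (x : ZMod n) : ℕ := min x.val (n - x.val)

/-- The (real) Fourier transform of a real-valued filter. -/
noncomputable def fhat (n : ℕ) [NeZero n] (G : ZMod n → ℝ) (f : ZMod n) : ℝ :=
  (dft n (fun t => ((G t : ℝ) : ℂ)) f).re

/-- `G` is an `(n,B,F)`-flat filter. -/
structure IsFlatFilter (n B F : ℕ) [NeZero n] (G : ZMod n → ℝ) : Prop where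
  realFT : ∀ f, (dft n (fun t => ((G t : ℝ) : ℂ)) f).im = 0
  symm : ∀ f, fhat n G (-f) = fhat n G f
  nonneg : ∀ f, 0 ≤ fhat n G f
  le_one : ∀ f, fhat n G f ≤ 1
  pass : ∀ f : ZMod n, (cdist n f : ℝ) ≤ (n : ℝ) / (2 * B) →
    1 - (1 / 4 : ℝ) ^ (F - 1) ≤ fhat n G f
  decay : ∀ f : ZMod n, (n : ℝ) / B ≤ (cdist n f : ℝ) →
    fhat n G f ≤ (1 / 4 : ℝ) ^ (F - 1) * ((n : ℝ) / (B * cdist n f)) ^ (F - 1)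

/-- `(n/B) · round(x·B/n)` computed modulo `n` (the nearest multiple of `n/B`). -/
noncomputable def roundMul (n B : ℕ) (x : ZMod n) : ZMod n :=
  ((n / B : ℕ) : ZMod n) * ((round ((x.val : ℚ) * B / n) : ℤ) : ZMod n)

/-- `o_f(f') = π(f') − (n/B)·round(π(f)·B/n)`, given the permuted values `pf = π(f)`,
`pf' = π(f')`. -/
noncomputable def offset (n B : ℕ) (pf pf' : ZMod n) : ZMod n :=
  pf' - roundMul n B pf


section AuxLemmas

lemma cdist_eq_natAbs {n : ℕ} [NeZero n] (x : ZMod n) : cdist n x = x.valMinAbs.natAbs :=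
  (ZMod.valMinAbs_natAbs_eq_min x).symm

lemma cdist_le_natAbs {n : ℕ} [NeZero n] (a : ℤ) : cdist n (a : ZMod n) ≤ a.natAbs := by
  rw [cdist_eq_natAbs]
  exact ZMod.natAbs_min_of_le_div_two n _ a (by rw [ZMod.coe_valMinAbs])
    (ZMod.natAbs_valMinAbs_le _)

lemma cdist_neg {n : ℕ} [NeZero n] (x : ZMod n) : cdist n (-x) = cdist n x := by
  rw [cdist_eq_natAbs, cdist_eq_natAbs, ZMod.natAbs_valMinAbs_neg]

lemma cdist_triangle {n : ℕ} [NeZero n] (x y : ZMod n) :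
    cdist n (x + y) ≤ cdist n x + cdist n y := by
  rw [cdist_eq_natAbs, cdist_eq_natAbs, cdist_eq_natAbs]
  exact (ZMod.natAbs_valMinAbs_add_le x y).trans (Int.natAbs_add_le _ _)

lemma cdist_le_n {n : ℕ} [NeZero n] (x : ZMod n) : cdist n x ≤ n :=
  le_trans (min_le_right _ _) (Nat.sub_le _ _)

lemma round_close {n : ℕ} [NeZero n] {B : ℕ} (hBn : B ∣ n) (x : ZMod n) :
    2 * cdist n (x - roundMul n B x) ≤ n / B := by
  have hn0 : 0 < n := Nat.pos_of_ne_zero (NeZero.ne n)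
  set s : ℕ := n / B with hs
  have hsB : B * s = n := Nat.mul_div_cancel' hBn
  set v : ℕ := x.val with hv
  set r : ℤ := round ((v : ℚ) * B / n) with hr
  have hrepr : x - roundMul n B x = (((v : ℤ) - (s : ℤ) * r : ℤ) : ZMod n) := by
    rw [roundMul, ← hs, ← hv, ← hr]
    push_cast
    rw [hv, ZMod.natCast_val, ZMod.cast_id]
  have h1 : 2 * cdist n (x - roundMul n B x) ≤ 2 * ((v : ℤ) - (s : ℤ) * r).natAbs := by
    rw [hrepr]; exact Nat.mul_le_mul_left 2 (cdist_le_natAbs _)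
  refine h1.trans ?_
  have hq : |(v : ℚ) - (s : ℚ) * r| ≤ (s : ℚ) / 2 := by
    have hround : |(v : ℚ) * B / n - r| ≤ 1 / 2 := abs_sub_round _
    have hsq : (s : ℚ) * ((v : ℚ) * B / n) = v := by
      have : (B : ℚ) * s = n := by exact_mod_cast hsB
      field_simp
      nlinarith [this]
    calc |(v : ℚ) - (s : ℚ) * r| = (s : ℚ) * |(v : ℚ) * B / n - r| := by
          rw [← abs_of_nonneg (by positivity : (0:ℚ) ≤ (s:ℚ)), ← abs_mul]
          congr 1
          rw [mul_sub, hsq]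
          rw [abs_of_nonneg (by positivity : (0:ℚ) ≤ (s:ℚ))]
      _ ≤ (s : ℚ) * (1 / 2) := by
          apply mul_le_mul_of_nonneg_left hround (by positivity)
      _ = (s : ℚ) / 2 := by ring
  have hfin : (2 * ((v : ℤ) - (s : ℤ) * r).natAbs : ℚ) ≤ (s : ℚ) := by
    push_cast [Nat.cast_natAbs]
    linarith [hq]
  exact_mod_cast hfin

lemma shell_bound {n B F : ℕ} [NeZero n] (hB : 0 < B) (hBn : B ∣ n) (hF : 2 ≤ F)
    {G : ZMod n → ℝ} (hG : IsFlatFilter n B F G) (pf pf' : ZMod n) (j : ℕ) (hj : 1 ≤ j)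
    (hd : 2 ^ j * (n / B) < cdist n (pf - pf')) :
    fhat n G (offset n B pf pf') ^ 2 ≤ 1 / (9 * 4 ^ j) := by
  have hn0 : 0 < n := Nat.pos_of_ne_zero (NeZero.ne n)
  set s : ℕ := n / B with hs
  have hsB : B * s = n := Nat.mul_div_cancel' hBn
  have hs1 : 1 ≤ s := (Nat.one_le_div_iff hB).mpr (Nat.le_of_dvd hn0 hBn)
  set o : ZMod n := offset n B pf pf' with ho
  set d : ℕ := cdist n (pf - pf') with hdd
  set c : ℕ := cdist n o with hc
  have htri : d ≤ cdist n (pf - roundMul n B pf) + c := by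
    have hsplit : pf - pf' = (pf - roundMul n B pf) + (-o) := by
      rw [ho, offset]; ring
    calc d = cdist n ((pf - roundMul n B pf) + (-o)) := by rw [hdd, hsplit]
      _ ≤ cdist n (pf - roundMul n B pf) + cdist n (-o) := cdist_triangle _ _
      _ = cdist n (pf - roundMul n B pf) + c := by rw [cdist_neg]
  have hround : 2 * cdist n (pf - roundMul n B pf) ≤ s := round_close hBn pf
  have hdc : (d : ℝ) ≤ (s : ℝ) / 2 + c := by
    have h1 : (d : ℝ) ≤ (cdist n (pf - roundMul n B pf) : ℝ) + c := by exact_mod_cast htri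
    have h2 : 2 * (cdist n (pf - roundMul n B pf) : ℝ) ≤ s := by exact_mod_cast hround
    linarith
  have hds : (2 : ℝ) ^ j * s < d := by exact_mod_cast hd
  have h2j : (2 : ℝ) ≤ (2 : ℝ) ^ j := by
    calc (2:ℝ) = 2 ^ 1 := (pow_one 2).symm
      _ ≤ 2 ^ j := pow_le_pow_right₀ (by norm_num) hj
  have hsR : (1 : ℝ) ≤ s := by exact_mod_cast hs1
  have h2s : 2 * (s : ℝ) ≤ d := by nlinarith
  have hcd : 3 * (d : ℝ) ≤ 4 * c := by linarith
  have hcs : (s : ℝ) ≤ c := by nlinarith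
  have hc0 : (0 : ℝ) < c := by linarith
  have hnB : (n : ℝ) / B = s := by
    rw [← hsB]; push_cast; field_simp
  have hdecay := hG.decay o (by rw [hnB, ← hc]; exact hcs)
  rw [← hc] at hdecay
  have hB0 : (B : ℝ) ≠ 0 := by positivity
  have hBc : (n : ℝ) / (B * c) = s / c := by
    rw [← hsB]; push_cast
    exact mul_div_mul_left _ _ hB0
  rw [hBc, ← mul_pow] at hdecay
  set x : ℝ := (1 / 4) * ((s : ℝ) / c) with hx
  have hx0 : 0 ≤ x := by positivity
  have hxle : x ≤ 1 / (3 * 2 ^ j) := by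
    rw [hx, show (1:ℝ)/4*((s:ℝ)/c) = (s:ℝ)/(4*c) by ring,
      div_le_div_iff₀ (by positivity) (by positivity)]
    nlinarith
  have hxle1 : x ≤ 1 := by
    have : (1 : ℝ) / (3 * 2 ^ j) ≤ 1 := by
      rw [div_le_one (by positivity)]; nlinarith
    linarith
  have hpow : x ^ (F - 1) ≤ x := by
    calc x ^ (F - 1) ≤ x ^ 1 := pow_le_pow_of_le_one hx0 hxle1 (by omega)
      _ = x := pow_one x
  have hfx : fhat n G o ≤ 1 / (3 * 2 ^ j) := le_trans hdecay (le_trans hpow hxle)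
  have hf0 : 0 ≤ fhat n G o := hG.nonneg o
  have hsq : fhat n G o ^ 2 ≤ (1 / (3 * 2 ^ j)) ^ 2 := by
    apply pow_le_pow_left₀ hf0 hfx
  refine hsq.trans (le_of_eq ?_)
  rw [div_pow, one_pow, mul_pow]
  norm_num
  rw [show (4:ℝ) = 2^2 by norm_num, ← pow_mul, mul_comm, pow_mul]

lemma sumA (m : ℕ) :
    ∑ j ∈ Finset.range (m+1), (if j = 0 then (1:ℝ) else 1/(9*4^j)) * 2^j
      ≤ 10/9 - (1/9)*(1/2)^m := by
  induction m with
  | zero => norm_num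
  | succ m ih =>
    rw [Finset.sum_range_succ]
    have h4 : ((4:ℝ))^(m+1) = 2^(m+1)*2^(m+1) := by
      rw [show (4:ℝ) = 2*2 by norm_num, mul_pow]
    have hterm : (if m+1 = 0 then (1:ℝ) else 1/(9*4^(m+1))) * 2^(m+1)
        = (1/9)*(1/2)^(m+1) := by
      rw [if_neg (Nat.succ_ne_zero m), h4]
      rw [div_pow, one_pow]
      field_simp
    have h2 : ((1:ℝ)/2)^m = 2*(1/2)^(m+1) := by rw [pow_succ]; ring
    rw [hterm]
    linarith

lemma exp_bound {n B F : ℕ} [NeZero n] (hB : 0 < B) (hBn : B ∣ n) (hF : 2 ≤ F)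
    {G : ZMod n → ℝ} (hG : IsFlatFilter n B F G)
    {Ω : Type} [Fintype Ω] (μ : Ω → ℝ) (hμ0 : ∀ ω, 0 ≤ μ ω)
    (π : Ω → (ZMod n ≃ ZMod n)) (f f' : ZMod n)
    (hpair : ∀ t : ℕ,
      ∑ ω ∈ Finset.univ.filter (fun ω => cdist n (π ω f - π ω f') ≤ t), μ ω ≤ 4 * t / n) :
    ∑ ω, μ ω * (fhat n G (offset n B (π ω f) (π ω f'))) ^ 2 ≤ 10 / B := by
  have hn0 : 0 < n := Nat.pos_of_ne_zero (NeZero.ne n)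
  set s : ℕ := n / B with hs
  have hsB : B * s = n := Nat.mul_div_cancel' hBn
  have hs1 : 1 ≤ s := (Nat.one_le_div_iff hB).mpr (Nat.le_of_dvd hn0 hBn)
  set A : ℕ → ℝ := fun j => if j = 0 then (1:ℝ) else 1/(9*4^j) with hA
  have hA0 : ∀ j, 0 ≤ A j := by
    intro j; rw [hA]; dsimp only; split <;> positivity
  have key : ∀ ω : Ω, (fhat n G (offset n B (π ω f) (π ω f'))) ^ 2 ≤
      ∑ j ∈ Finset.range (n+1),
        A j * (if cdist n (π ω f - π ω f') ≤ 2^(j+1) * s then (1:ℝ) else 0) := by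
    intro ω
    set d : ℕ := cdist n (π ω f - π ω f') with hd
    have hex : ∃ j, d ≤ 2^(j+1)*s := by
      refine ⟨n, ?_⟩
      calc d ≤ n := cdist_le_n _
        _ ≤ 2^n := (Nat.lt_two_pow_self).le
        _ ≤ 2^(n+1) := Nat.pow_le_pow_right (by norm_num) (by omega)
        _ ≤ 2^(n+1)*s := Nat.le_mul_of_pos_right _ hs1
    obtain ⟨j, hjn, hfj, hdj⟩ : ∃ j ≤ n,
        (fhat n G (offset n B (π ω f) (π ω f'))) ^ 2 ≤ A j ∧ d ≤ 2^(j+1)*s := by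
      refine ⟨Nat.find hex, ?_, ?_, Nat.find_spec hex⟩
      · apply Nat.find_le
        calc d ≤ n := cdist_le_n _
          _ ≤ 2^n := (Nat.lt_two_pow_self).le
          _ ≤ 2^(n+1) := Nat.pow_le_pow_right (by norm_num) (by omega)
          _ ≤ 2^(n+1)*s := Nat.le_mul_of_pos_right _ hs1
      · match h : Nat.find hex with
        | 0 =>
          rw [hA]; dsimp only; rw [if_pos rfl]
          exact pow_le_one₀ (hG.nonneg _) (hG.le_one _)
        | (k+1) =>
          have hmin : ¬ (d ≤ 2^(k+1)*s) := by
            have := Nat.find_min hex (h ▸ k.lt_succ_self)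
            exact this
          have hlt : 2^(k+1) * s < d := Nat.lt_of_not_le hmin
          have := shell_bound hB hBn hF hG (π ω f) (π ω f') (k+1) (by omega) (hs ▸ hlt)
          rw [hA]; dsimp only; rw [if_neg (Nat.succ_ne_zero k)]
          exact this
    have hmem : j ∈ Finset.range (n+1) := Finset.mem_range.mpr (by omega)
    calc (fhat n G (offset n B (π ω f) (π ω f'))) ^ 2 ≤
        A j * (if cdist n (π ω f - π ω f') ≤ 2^(j+1) * s then (1:ℝ) else 0) := by
          rw [← hd, if_pos hdj, mul_one]; exact hfj
      _ ≤ _ := by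
          apply Finset.single_le_sum (f := fun j =>
            A j * (if cdist n (π ω f - π ω f') ≤ 2^(j+1) * s then (1:ℝ) else 0)) ?_ hmem
          intro i _
          have h := hA0 i
          split
          · simpa using h
          · simp
  calc ∑ ω, μ ω * (fhat n G (offset n B (π ω f) (π ω f'))) ^ 2
      ≤ ∑ ω, μ ω * ∑ j ∈ Finset.range (n+1),
          A j * (if cdist n (π ω f - π ω f') ≤ 2^(j+1) * s then (1:ℝ) else 0) := by
        exact Finset.sum_le_sum fun ω _ => mul_le_mul_of_nonneg_left (key ω) (hμ0 ω)
    _ = ∑ j ∈ Finset.range (n+1), A j *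
          ∑ ω, μ ω * (if cdist n (π ω f - π ω f') ≤ 2^(j+1) * s then (1:ℝ) else 0) := by
        simp_rw [Finset.mul_sum]
        rw [Finset.sum_comm]
        congr 1; funext j
        congr 1; funext ω
        ring
    _ ≤ ∑ j ∈ Finset.range (n+1), A j * (4 * (2^(j+1) * s : ℕ) / n) := by
        apply Finset.sum_le_sum
        intro j _
        apply mul_le_mul_of_nonneg_left ?_ (hA0 j)
        have heq : ∑ ω, μ ω * (if cdist n (π ω f - π ω f') ≤ 2^(j+1) * s then (1:ℝ) else 0)
            = ∑ ω ∈ Finset.univ.filter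
                (fun ω => cdist n (π ω f - π ω f') ≤ 2^(j+1) * s), μ ω := by
          rw [Finset.sum_filter]
          congr 1; funext ω
          split <;> simp
        rw [heq]
        exact hpair (2^(j+1) * s)
    _ ≤ 10 / B := by
        have hcast : ∀ j, A j * (4 * ((2^(j+1) * s : ℕ) : ℝ) / n)
            = (A j * 2^j) * (8 * s / n) := by
          intro j
          push_cast
          rw [pow_succ]
          ring
        simp_rw [hcast]
        rw [← Finset.sum_mul]
        have hsn : (0:ℝ) ≤ 8 * s / n := by positivity
        have hsum := sumA n
        have h1 : (∑ j ∈ Finset.range (n+1), A j * 2^j) ≤ 10/9 := by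
          have hpos : (0:ℝ) ≤ (1/9)*(1/2)^n := by positivity
          rw [hA]
          linarith [hsum]
        have hsnB : (s:ℝ)/n = 1/B := by
          rw [← hsB]
          push_cast
          rw [eq_div_iff (by positivity)]
          field_simp
        calc (∑ j ∈ Finset.range (n+1), A j * 2^j) * (8 * s / n)
            ≤ (10/9) * (8 * s / n) := mul_le_mul_of_nonneg_right h1 hsn
          _ = (80/9) * ((s:ℝ)/n) := by ring
          _ = (80/9) * (1/B) := by rw [hsnB]
          _ ≤ 10 / B := by
              have : (0:ℝ) ≤ 1/B := by positivity
              calc (80/9) * ((1:ℝ)/B) ≤ 10 * (1/B) := by linarith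
                _ = 10 / B := by ring

end AuxLemmas

/-- For any approximately pairwise-independent random permutation `π` (modeled on a
finite probability space `(Ω, μ)`), any `(n,B,F)`-flat filter `G`, any `X` and any `f`:
`∑_{f' ≠ f} |X̂_{f'}|² E_π[|Ĝ_{o_f(f')}|²] ≤ (10/B)·‖X̂‖₂²`. -/
theorem flat_filter_offset_energy (n B F : ℕ) [NeZero n]
    (hn : ∃ k, n = 2 ^ k) (hB : ∃ k, B = 2 ^ k) (hBn : B ∣ n) (hF : 2 ≤ F)
    (G : ZMod n → ℝ) (hG : IsFlatFilter n B F G)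
    (Ω : Type) [Fintype Ω] (μ : Ω → ℝ) (hμ0 : ∀ ω, 0 ≤ μ ω) (hμ1 : ∑ ω, μ ω = 1)
    (π : Ω → (ZMod n ≃ ZMod n))
    (hpair : ∀ i i' : ZMod n, i ≠ i' → ∀ t : ℕ,
      ∑ ω ∈ Finset.univ.filter (fun ω => cdist n (π ω i - π ω i') ≤ t), μ ω ≤
        4 * t / n)
    (X : ZMod n → ℂ) (f : ZMod n) :
    ∑ f' ∈ Finset.univ.filter (fun f' : ZMod n => f' ≠ f),
        ‖dft n X f'‖ ^ 2 *
          (∑ ω, μ ω * (fhat n G (offset n B (π ω f) (π ω f'))) ^ 2) ≤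
      10 / B * ∑ f'' : ZMod n, ‖dft n X f''‖ ^ 2 := by
  have hB0 : 0 < B := by
    obtain ⟨k, hk⟩ := hB
    rw [hk]; exact pow_pos (by norm_num) k
  have h10B : (0:ℝ) ≤ 10 / B := by positivity
  calc ∑ f' ∈ Finset.univ.filter (fun f' : ZMod n => f' ≠ f),
        ‖dft n X f'‖ ^ 2 *
          (∑ ω, μ ω * (fhat n G (offset n B (π ω f) (π ω f'))) ^ 2)
      ≤ ∑ f' ∈ Finset.univ.filter (fun f' : ZMod n => f' ≠ f),
          ‖dft n X f'‖ ^ 2 * (10 / B) := by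
        apply Finset.sum_le_sum
        intro f' hf'
        have hne : f' ≠ f := (Finset.mem_filter.mp hf').2
        apply mul_le_mul_of_nonneg_left ?_ (by positivity)
        exact exp_bound hB0 hBn hF hG μ hμ0 π f f' (fun t => hpair f f' hne.symm t)
    _ = (10 / B) * ∑ f' ∈ Finset.univ.filter (fun f' : ZMod n => f' ≠ f),
          ‖dft n X f'‖ ^ 2 := by
        rw [← Finset.sum_mul, mul_comm]
    _ ≤ 10 / B * ∑ f'' : ZMod n, ‖dft n X f''‖ ^ 2 := by
        apply mul_le_mul_of_nonneg_left ?_ h10B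
        apply Finset.sum_le_sum_of_subset_of_nonneg (Finset.filter_subset _ _)
        intro i _ _
        positivity
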